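/- Let {X_t}_{t=0}^∞ and {P_t}_{t=0}^∞ be nonnegative sequences with P_t ≥ P_{t+1} for all t, and suppose X_{t+1}² ≤ (X_t + X_{t-1})(P_t − P_{t+1}) for all t ≥ 0 (with some convention for X_{-1} ≥ 0). Then for every i ≥ 0, Σ_{j=i}^∞ X_{j+1} ≤ X_i + X_{i-1} + 4 P_i; in particular the series Σ X_j converges. -/

import Mathlib

theorem finite_length_property (X P : ℕ → ℝ)
    (hX : ∀ t, 0 ≤ X t) (hP : ∀ t, 0 ≤ P t) (hPmono : ∀ t, P (t + 1) ≤ P t)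
    (hrec : ∀ t, 1 ≤ t → (X (t + 1))^2 ≤ (X t + X (t - 1)) * (P t - P (t + 1))) :
    Summable X ∧
      ∀ i, 1 ≤ i → (∑' k : ℕ, X (i + 1 + k)) ≤ X i + X (i - 1) + 4 * P i := by
  have key : ∀ t, 1 ≤ t → X (t + 1) ≤ (X t + X (t - 1)) / 4 + (P t - P (t + 1)) := by
    intro t ht
    have h1 := hrec t ht
    have h2 := hX (t + 1)
    have h3 := hX t
    have h4 := hX (t - 1)
    have h5 := hPmono t
    nlinarith [sq_nonneg ((X t + X (t - 1)) / 4 - (P t - P (t + 1))), sq_nonneg (X (t + 1))]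
  have main : ∀ i, 1 ≤ i → ∀ n, ∑ k ∈ Finset.range n, X (i + 1 + k) ≤ X i + X (i - 1) + 4 * P i := by
    intro i hi n
    have hA : ∀ m, ∑ k ∈ Finset.range m, X (i + k) ≤ X i + ∑ k ∈ Finset.range m, X (i + 1 + k) := by
      intro m
      cases m with
      | zero => simpa using hX i
      | succ m =>
        rw [Finset.sum_range_succ' (fun k => X (i + k)), Finset.sum_range_succ (fun k => X (i + 1 + k))]
        have he : ∀ k, X (i + (k + 1)) = X (i + 1 + k) := by
          intro k; congr 1; omega
        simp only [he, Nat.add_zero]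
        have := hX (i + 1 + m)
        linarith
    have hB : ∀ m, ∑ k ∈ Finset.range m, X (i - 1 + k) ≤ X (i - 1) + ∑ k ∈ Finset.range m, X (i + k) := by
      intro m
      cases m with
      | zero => simpa using hX (i - 1)
      | succ m =>
        rw [Finset.sum_range_succ' (fun k => X (i - 1 + k)), Finset.sum_range_succ (fun k => X (i + k))]
        have he : ∀ k, X (i - 1 + (k + 1)) = X (i + k) := by
          intro k; congr 1; omega
        simp only [he, Nat.add_zero]
        have := hX (i + m)
        linarith
    have hstep : ∑ k ∈ Finset.range n, X (i + 1 + k) ≤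
        ∑ k ∈ Finset.range n, ((X (i + k) + X (i - 1 + k)) / 4 + (P (i + k) - P (i + k + 1))) := by
      apply Finset.sum_le_sum
      intro k _
      have hk := key (i + k) (by omega)
      have e1 : X (i + k + 1) = X (i + 1 + k) := by congr 1; omega
      have e2 : X (i + k - 1) = X (i - 1 + k) := by congr 1; omega
      rw [e1, e2] at hk
      exact hk
    have htel : ∑ k ∈ Finset.range n, (P (i + k) - P (i + k + 1)) = P i - P (i + n) := by
      have := Finset.sum_range_sub' (fun k => P (i + k)) n
      simpa [add_assoc] using this
    rw [Finset.sum_add_distrib, htel] at hstep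
    have hsplit : ∑ k ∈ Finset.range n, ((X (i + k) + X (i - 1 + k)) / 4)
        = (∑ k ∈ Finset.range n, X (i + k) + ∑ k ∈ Finset.range n, X (i - 1 + k)) / 4 := by
      rw [← Finset.sum_add_distrib, Finset.sum_div]
    rw [hsplit] at hstep
    have h1 := hA n
    have h2 := hB n
    have h3 := hP (i + n)
    have h4 := hP i
    have h5 := hX i
    have h6 := hX (i - 1)
    linarith
  have hsum2 : Summable fun k => X (1 + 1 + k) := by
    apply summable_of_sum_range_le (fun n => hX _) (main 1 le_rfl)
  have hsumX : Summable X := by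
    have : (fun k => X (1 + 1 + k)) = fun k => X (k + 2) := by
      funext k; congr 1; omega
    rw [this] at hsum2
    exact (summable_nat_add_iff 2).mp hsum2
  refine ⟨hsumX, fun i hi => ?_⟩
  exact Real.tsum_le_of_sum_range_le (fun n => hX _) (main i hi)
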